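/- Let ℓ ≥ 1 and let α ∈ 𝒩^ℓ with κ_i = ν(α,i) (so ℓ = κ_0 + κ_1 + ⋯ + κ_{α_1}). Then the following identity of rational functions in ω holds: P_α(ω^{−1}) = ω^{ ℓ − κ_0 − (κ_{α_1}κ_{α_1−1} + ⋯ + κ_2κ_1 + κ_1κ_0) } · P_α(ω). -/

import Mathlib

noncomputable section
open scoped BigOperators Classical

abbrev K : Type := RatFunc ℂ

noncomputable def ω : K := RatFunc.X

def nu {k : ℕ} (α : Fin k → ℤ) (i : ℤ) : ℕ :=
  (Finset.univ.filter (fun j => α j = i)).card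

def shift {k : ℕ} (α : Fin k → ℤ) (m : ℤ) : Fin k → ℤ := fun j => α j + m

def Adm (k : ℕ) : Set (Fin k → ℤ) :=
  {α | (∀ j : Fin k, -((j : ℕ) : ℤ) ≤ α j ∧ α j ≤ (k : ℤ) - ((j : ℕ) : ℤ) - 1) ∧
       (∀ i : Fin k, ∀ h : (i : ℕ) + 1 < k, α i ≤ α ⟨(i : ℕ) + 1, h⟩ + 1)}

def Noninc (k : ℕ) : Set (Fin k → ℤ) :=
  {α | ∀ i : Fin k, ∀ h : (i : ℕ) + 1 < k,
      α ⟨(i : ℕ) + 1, h⟩ ≤ α i ∧ α i ≤ α ⟨(i : ℕ) + 1, h⟩ + 1}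

def NSet (k : ℕ) : Set (Fin (k+1) → ℤ) :=
  {α | α ∈ Adm (k+1) ∧ α ∈ Noninc (k+1) ∧ α (Fin.last k) = 0}

noncomputable def gbinom (m r : ℕ) : K :=
  ∏ s ∈ Finset.range r, (1 - ω ^ (m - s)) / (1 - ω ^ (s + 1))

noncomputable def P {k : ℕ} (α : Fin (k+1) → ℤ) : K :=
  if α ∈ Adm (k+1) ∩ Noninc (k+1) then
    (∏ i ∈ Finset.Icc (1 : ℤ) (α 0),
        gbinom (nu α i + nu α (i-1) - 1) (nu α i)) *
    (∏ i ∈ Finset.Icc (α (Fin.last k) + 1) (0 : ℤ),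
        gbinom (nu α i + nu α (i-1) - 1) (nu α (i-1)))
  else 0

/-! ### Auxiliary lemmas -/

lemma omega_ne_zero : ω ≠ 0 := RatFunc.X_ne_zero

lemma omega_pow_ne_one {b : ℕ} (hb : 1 ≤ b) : ω ^ b ≠ 1 := by
  intro h
  have h2 : ((RatFunc.X : K)^b) = algebraMap (Polynomial ℂ) K (Polynomial.X ^ b) := by
    simp [RatFunc.algebraMap_X]
  have := congrArg RatFunc.intDegree h
  rw [ω, RatFunc.intDegree_one, h2, RatFunc.intDegree_polynomial] at this
  simp [Polynomial.natDegree_X_pow] at this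
  omega

lemma one_sub_ne_zero {b : ℕ} (hb : 1 ≤ b) : (1 : K) - ω ^ b ≠ 0 :=
  sub_ne_zero.mpr (fun h => omega_pow_ne_one hb h.symm)

lemma factor_lem (σ : K ≃ₐ[ℂ] K) (hσ : σ ω = ω⁻¹) (a b : ℕ) (hb : 1 ≤ b) :
    σ ((1 - ω ^ a) / (1 - ω ^ b)) =
      ω ^ ((b : ℤ) - (a : ℤ)) * ((1 - ω ^ a) / (1 - ω ^ b)) := by
  have key : ∀ c : ℕ, (1 : K) - (ω⁻¹) ^ c = -(ω ^ c)⁻¹ * (1 - ω ^ c) := by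
    intro c
    have hx : ω ^ c ≠ 0 := pow_ne_zero _ omega_ne_zero
    rw [inv_pow, neg_mul, mul_sub, mul_one, inv_mul_cancel₀ hx]
    ring
  rw [map_div₀, map_sub, map_sub, map_one, map_pow, map_pow, hσ, key, key,
    neg_mul, neg_mul, neg_div_neg_eq]
  rw [zpow_sub₀ omega_ne_zero, zpow_natCast, zpow_natCast]
  field_simp [omega_ne_zero, one_sub_ne_zero hb]

lemma sum_exp (r : ℕ) : ∀ m : ℕ, r ≤ m →
    ∑ s ∈ Finset.range r, (((s:ℤ) + 1) - ((m - s : ℕ) : ℤ)) = (r:ℤ)*r - r*m := by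
  induction r with
  | zero => simp
  | succ r ih =>
    intro m hm
    rw [Finset.sum_range_succ, ih m (by omega), Nat.cast_sub (by omega)]
    push_cast; ring

lemma prod_omega_zpow (s : Finset ℤ) (e : ℤ → ℤ) :
    ∏ i ∈ s, ω ^ (e i) = ω ^ (∑ i ∈ s, e i) := by
  classical
  induction s using Finset.induction with
  | empty => simp
  | insert _ _ h ih => simp [Finset.prod_insert h, Finset.sum_insert h,
      zpow_add₀ omega_ne_zero, ih]

lemma sigma_gbinom (σ : K ≃ₐ[ℂ] K) (hσ : σ ω = ω⁻¹) (m r : ℕ) (hr : r ≤ m) :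
    σ (gbinom m r) = ω ^ ((r:ℤ)*r - r*m) * gbinom m r := by
  rw [gbinom, map_prod]
  rw [Finset.prod_congr rfl (fun s hs => factor_lem σ hσ (m - s) (s+1) (by omega))]
  rw [Finset.prod_mul_distrib]
  have h1 : ∏ s ∈ Finset.range r, ω ^ (((s+1 : ℕ) : ℤ) - ((m - s : ℕ) : ℤ))
      = ω ^ ((r:ℤ)*r - r*m) := by
    rw [show ((r:ℤ)*r - r*m) = ∑ s ∈ Finset.range r, (((s:ℤ) + 1) - ((m - s : ℕ) : ℤ))
      from (sum_exp r m hr).symm]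
    push_cast
    induction (Finset.range r) using Finset.induction with
    | empty => simp
    | insert _ _ h ih => rw [Finset.prod_insert h, Finset.sum_insert h,
        zpow_add₀ omega_ne_zero, ih]
  rw [h1]

section Structural

variable {l : ℕ} {α : Fin (l+1) → ℤ}

lemma anti (hnon : α ∈ Noninc (l+1)) :
    ∀ b a : ℕ, ∀ ha : a < l+1, ∀ hb : b < l+1, a ≤ b → α ⟨b,hb⟩ ≤ α ⟨a,ha⟩ := by
  intro b
  induction b with
  | zero =>
    intro a ha hb hab
    have : a = 0 := by omega
    subst this; exact le_refl _
  | succ b ih =>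
    intro a ha hb hab
    rcases Nat.eq_or_lt_of_le hab with h | h
    · subst h; exact le_refl _
    · have h1 : b < l + 1 := by omega
      have h2 := (hnon ⟨b, h1⟩ (by simpa using hb)).1
      exact le_trans h2 (ih a ha h1 (by omega))

lemma anti0 (hnon : α ∈ Noninc (l+1)) : ∀ b : ℕ, ∀ hb : b < l+1, α ⟨b,hb⟩ ≤ α 0 := by
  intro b hb
  have := anti hnon b 0 (by omega) hb (by omega)
  simpa using this

lemma nonneg (hnon : α ∈ Noninc (l+1)) (hlast : α (Fin.last l) = 0) :
    ∀ j : Fin (l+1), 0 ≤ α j := by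
  intro j
  have := anti hnon l j.val j.isLt (by omega) (by omega)
  rw [show (⟨l, by omega⟩ : Fin (l+1)) = Fin.last l from rfl, hlast] at this
  simpa using this

lemma hits (hnon : α ∈ Noninc (l+1)) (hlast : α (Fin.last l) = 0)
    (i : ℤ) (h0 : 0 ≤ i) (h1 : i ≤ α 0) : ∃ j : Fin (l+1), α j = i := by
  classical
  set S : Finset (Fin (l+1)) := Finset.univ.filter (fun j => i ≤ α j) with hS
  have h0S : (0 : Fin (l+1)) ∈ S := by simp [hS, h1]
  have hne : S.Nonempty := ⟨0, h0S⟩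
  set j := S.max' hne with hj
  have hjS : j ∈ S := S.max'_mem hne
  have hji : i ≤ α j := by simpa [hS] using hjS
  by_cases hcase : (j : ℕ) + 1 < l + 1
  · refine ⟨j, le_antisymm ?_ hji⟩
    have hnotin : (⟨(j:ℕ)+1, hcase⟩ : Fin (l+1)) ∉ S := by
      intro hin
      have h2 : ((⟨(j:ℕ)+1, hcase⟩ : Fin (l+1)) : ℕ) ≤ (j : ℕ) := S.le_max' _ hin
      simp at h2
    have hlt : α ⟨(j:ℕ)+1, hcase⟩ < i := by
      by_contra hc
      exact hnotin (by simp [hS]; omega)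
    have := (hnon j hcase).2
    omega
  · have hjl : (j : ℕ) = l := by omega
    have : j = Fin.last l := Fin.ext hjl
    rw [this, hlast] at hji
    exact ⟨Fin.last l, by omega⟩

lemma nu_pos (hnon : α ∈ Noninc (l+1)) (hlast : α (Fin.last l) = 0)
    (i : ℤ) (h0 : 0 ≤ i) (h1 : i ≤ α 0) : 1 ≤ nu α i := by
  obtain ⟨j, hj⟩ := hits hnon hlast i h0 h1
  rw [nu, Nat.succ_le_iff, Finset.card_pos]
  exact ⟨j, by simp [hj]⟩

lemma card_sum (hnon : α ∈ Noninc (l+1)) (hlast : α (Fin.last l) = 0) :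
    ∑ i ∈ Finset.Icc (0:ℤ) (α 0), nu α i = l + 1 := by
  have := Finset.card_eq_sum_card_fiberwise (f := α) (s := Finset.univ)
    (t := Finset.Icc (0:ℤ) (α 0))
    (fun j _ => Finset.mem_Icc.mpr ⟨nonneg hnon hlast j, anti0 hnon j.val j.isLt⟩)
  simp only [Finset.card_univ, Fintype.card_fin] at this
  simp only [nu]
  omega

end Structural

/-- behaviour of `P_α` under `ω ↦ ω⁻¹`. -/
theorem stmt9 (l : ℕ) (α : Fin (l+1) → ℤ) (hα : α ∈ NSet l)
    (σ : K ≃ₐ[ℂ] K) (hσ : σ ω = ω⁻¹) :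
    σ (P α) =
      ω ^ ((((l : ℤ) + 1) - (nu α 0 : ℤ))
            - ∑ i ∈ Finset.Icc (1 : ℤ) (α 0), ((nu α i : ℤ) * (nu α (i-1) : ℤ)))
        * P α := by
  obtain ⟨hadm, hnon, hlast⟩ := hα
  have h00 : (0:ℤ) ≤ α 0 := nonneg hnon hlast 0
  have hP : P α = ∏ i ∈ Finset.Icc (1:ℤ) (α 0),
      gbinom (nu α i + nu α (i-1) - 1) (nu α i) := by
    rw [P, if_pos ⟨hadm, hnon⟩, hlast]
    rw [show Finset.Icc ((0:ℤ)+1) 0 = ∅ from Finset.Icc_eq_empty (by omega)]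
    simp
  -- sum of fibers over Icc 1 (α 0)
  have h1 : Finset.Icc (0:ℤ) (α 0) = insert 0 (Finset.Icc 1 (α 0)) := by
    ext x; simp [Finset.mem_Icc]; omega
  have h2 : (0:ℤ) ∉ Finset.Icc (1:ℤ) (α 0) := by simp
  have hsum : nu α 0 + ∑ i ∈ Finset.Icc (1:ℤ) (α 0), nu α i = l + 1 := by
    have := card_sum hnon hlast
    rwa [h1, Finset.sum_insert h2] at this
  have key : ∀ i ∈ Finset.Icc (1:ℤ) (α 0),
      σ (gbinom (nu α i + nu α (i-1) - 1) (nu α i)) =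
      ω ^ ((nu α i : ℤ) - (nu α i : ℤ) * (nu α (i-1) : ℤ)) *
        gbinom (nu α i + nu α (i-1) - 1) (nu α i) := by
    intro i hi
    rw [Finset.mem_Icc] at hi
    have hki : 1 ≤ nu α i := nu_pos hnon hlast i (by omega) hi.2
    have hki' : 1 ≤ nu α (i-1) := nu_pos hnon hlast (i-1) (by omega) (by omega)
    have hr : nu α i ≤ nu α i + nu α (i-1) - 1 := by omega
    rw [sigma_gbinom σ hσ _ _ hr]
    congr 1
    have hc : ((nu α i + nu α (i-1) - 1 : ℕ) : ℤ)
        = (nu α i : ℤ) + (nu α (i-1) : ℤ) - 1 := by omega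
    rw [hc]; ring
  rw [hP, map_prod, Finset.prod_congr rfl key, Finset.prod_mul_distrib,
    prod_omega_zpow]
  congr 2
  rw [Finset.sum_sub_distrib]
  have : ∑ i ∈ Finset.Icc (1:ℤ) (α 0), (nu α i : ℤ) = (l : ℤ) + 1 - (nu α 0 : ℤ) := by
    have := hsum
    push_cast [← Nat.cast_sum] at *
    omega
  rw [this]
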